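/- Let ξ ∈ K[G] be nonzero, let β ∈ L ⊗_K L satisfy φ(β) = ξ, and let a, b ∈ ℤ. Then the following are equivalent: (a) [a,b] ∈ G(β); (b) f_ξ(−b−i_0) = a and f_ξ(−b−i_0+1) > a. -/

import Mathlib

open scoped TensorProduct

noncomputable section

/-- The natural action of the group algebra `K[G]`, `G = Gal(L/K)`, on `L`. -/
def actK (K L : Type) [Field K] [Field L] [Algebra K L]
    (ξ : MonoidAlgebra K (L ≃ₐ[K] L)) (y : L) : L :=
  ξ.coeff.sum fun σ c => algebraMap K L c * σ y

/-- `vL` is a normalized (additive, surjective onto `ℤ`) valuation on the field `L`. -/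
def IsNormValuation {L : Type} [Field L] (vL : L → WithTop ℤ) : Prop :=
  vL 0 = ⊤ ∧ (∀ x : L, x ≠ 0 → vL x ≠ ⊤) ∧
    (∀ x y : L, vL (x * y) = vL x + vL y) ∧
    (∀ x y : L, min (vL x) (vL y) ≤ vL (x + y)) ∧
    (∀ m : ℤ, ∃ x : L, vL x = (m : WithTop ℤ))

/-- Bundled context: `vL` is the normalized valuation of `L`, Galois-invariant;
`K` embeds with value group `p^n ℤ` (so `L/K` is totally ramified of degree `p^n`);
`L` is complete; and the residue field (of `K`, hence of `L`) is perfect of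
characteristic `p`. -/
def LocalCtx (p n : ℕ) (K L : Type) [Field K] [Field L] [Algebra K L]
    (vL : L → WithTop ℤ) : Prop :=
  IsNormValuation vL ∧
  (∀ (σ : L ≃ₐ[K] L) (x : L), vL (σ x) = vL x) ∧
  (∀ k : K, k ≠ 0 → ∃ m : ℤ, vL (algebraMap K L k) = ((p ^ n * m : ℤ) : WithTop ℤ)) ∧
  (∀ f : ℕ → L,
    (∀ m : ℤ, ∃ N : ℕ, ∀ j k : ℕ, N ≤ j → N ≤ k → (m : WithTop ℤ) < vL (f j - f k)) →
    ∃ x : L, ∀ m : ℤ, ∃ N : ℕ, ∀ k : ℕ, N ≤ k → (m : WithTop ℤ) < vL (f k - x)) ∧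
  (∀ x : K, (0 : WithTop ℤ) ≤ vL (algebraMap K L x) →
    ∃ y : K, (0 : WithTop ℤ) < vL (algebraMap K L (x - y ^ p)))

/-- The `i`-th digit of `s` in base `p`. -/
def digit (p s i : ℕ) : ℕ := s / p ^ i % p

/-- `r : ℤ → S_{p^n}`, the least nonnegative residue modulo `p^n`. -/
def rres (p n : ℕ) (t : ℤ) : ℕ := (t % ((p : ℤ) ^ n)).toNat

/-- `𝔟(s) = s_(0) p^0 b_n + s_(1) p^1 b_{n-1} + ⋯ + s_(n-1) p^{n-1} b_1`. -/
def bfrak (p n : ℕ) (b : ℕ → ℤ) (s : ℕ) : ℤ :=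
  ∑ i ∈ Finset.range n, (digit p s i : ℤ) * (p : ℤ) ^ i * b (n - i)

/-- `𝔞 : S_{p^n} → S_{p^n}` is the inverse of the bijection `r ∘ (-𝔟)`. -/
def IsAfrak (p n : ℕ) (b : ℕ → ℤ) (afrak : ℕ → ℕ) : Prop :=
  ∀ s : ℕ, s < p ^ n → afrak s < p ^ n ∧ rres p n (-(bfrak p n b (afrak s))) = s

/-- `b 1 ≤ ⋯ ≤ b n` are the lower ramification breaks of `L/K`, counted with
multiplicity: for every `m`, the lower ramification group `G_m` has order
`p ^ #{i ∈ [1,n] : b i ≥ m}`. -/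
def IsRamBreaks (p n : ℕ) (K L : Type) [Field K] [Field L] [Algebra K L]
    (vL : L → WithTop ℤ) (b : ℕ → ℤ) : Prop :=
  (∀ i j : ℕ, 1 ≤ i → i ≤ j → j ≤ n → b i ≤ b j) ∧
  ∀ m : ℤ, Nat.card {σ : L ≃ₐ[K] L // ∀ x : L, (0 : WithTop ℤ) ≤ vL x →
      ((m + 1 : ℤ) : WithTop ℤ) ≤ vL (σ x - x)} =
    p ^ ((Finset.Icc 1 n).filter fun i => m ≤ b i).card

/-- `({Ψ_i}, {λ_t})` is a Galois scaffold for `L/K` with precision `c`. -/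
def IsGaloisScaffold (p n : ℕ) (K L : Type) [Field K] [Field L] [Algebra K L]
    (vL : L → WithTop ℤ) (b : ℕ → ℤ) (afrak : ℕ → ℕ)
    (Ψ : ℕ → MonoidAlgebra K (L ≃ₐ[K] L)) (lam : ℤ → L) (c : ℕ) : Prop :=
  (∀ t : ℤ, vL (lam t) = (t : WithTop ℤ)) ∧
  (∀ t₁ t₂ : ℤ, ((p : ℤ) ^ n) ∣ (t₁ - t₂) → ∃ k : K, lam t₁ = algebraMap K L k * lam t₂) ∧
  (∀ i : ℕ, 1 ≤ i → i ≤ n → actK K L (Ψ i) 1 = 0) ∧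
  (∀ i : ℕ, 1 ≤ i → i ≤ n → ∀ t : ℤ,
    (1 ≤ digit p (afrak (rres p n t)) (n - i) →
      ∃ u : K, vL (algebraMap K L u) = 0 ∧
        ((t + (p : ℤ) ^ (n - i) * b i + c : ℤ) : WithTop ℤ) ≤
          vL (actK K L (Ψ i) (lam t) -
            algebraMap K L u * lam (t + (p : ℤ) ^ (n - i) * b i))) ∧
    (digit p (afrak (rres p n t)) (n - i) = 0 →
      ((t + (p : ℤ) ^ (n - i) * b i + c : ℤ) : WithTop ℤ) ≤
        vL (actK K L (Ψ i) (lam t))))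

/-- The map `a ⊗ b ↦ a · σ(b)`. -/
def phiAux (K L : Type) [Field K] [Field L] [Algebra K L] (σ : L ≃ₐ[K] L) :
    L ⊗[K] L →ₗ[K] L :=
  TensorProduct.lift ((LinearMap.mul K L).compl₂ σ.toLinearMap)

/-- The map `φ : L ⊗_K L → L[G]`, `φ(a ⊗ b) = Σ_{σ ∈ G} a σ(b) σ`, with `L[G]`
realized as finitely supported functions `G →₀ L`. -/
def phi (K L : Type) [Field K] [Field L] [Algebra K L] [FiniteDimensional K L] :
    L ⊗[K] L →ₗ[K] ((L ≃ₐ[K] L) →₀ L) :=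
  ∑ σ : L ≃ₐ[K] L, (Finsupp.lsingle σ).comp (phiAux K L σ)

/-- `φ(β)` lies in `K[G] ⊆ L[G]`, i.e. all its coefficients are in `K`. -/
def PhiInKG (K L : Type) [Field K] [Field L] [Algebra K L] [FiniteDimensional K L]
    (β : L ⊗[K] L) : Prop :=
  ∀ σ : L ≃ₐ[K] L, ∃ k : K, phi K L β σ = algebraMap K L k

/-- `𝒯` is the set of Teichmüller representatives of `K`: a multiplicatively
closed set of representatives for the residue field. -/
def IsTeichmuller (K L : Type) [Field K] [Field L] [Algebra K L]
    (vL : L → WithTop ℤ) (𝒯 : Set K) : Prop :=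
  (0 : K) ∈ 𝒯 ∧
  (∀ x ∈ 𝒯, x ≠ 0 → vL (algebraMap K L x) = 0) ∧
  (∀ t₁ ∈ 𝒯, ∀ t₂ ∈ 𝒯, t₁ * t₂ ∈ 𝒯) ∧
  (∀ x : K, (0 : WithTop ℤ) ≤ vL (algebraMap K L x) →
    ∃! t : K, t ∈ 𝒯 ∧ (0 : WithTop ℤ) < vL (algebraMap K L (x - t)))

/-- The partial order on `(ℤ × ℤ)/H`, `H = ⟨(p^n, -p^n)⟩`, expressed on
representatives: `[q] ≤ [q']` iff some representative of `[q']` dominates `q`. -/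
def cosetLE (p n : ℕ) (q q' : ℤ × ℤ) : Prop :=
  ∃ k : ℤ, q.1 ≤ q'.1 + k * (p : ℤ) ^ n ∧ q.2 ≤ q'.2 - k * (p : ℤ) ^ n

/-- Equality of cosets modulo `H = ⟨(p^n, -p^n)⟩`. -/
def cosetEq (p n : ℕ) (q q' : ℤ × ℤ) : Prop :=
  ∃ k : ℤ, q'.1 = q.1 + k * (p : ℤ) ^ n ∧ q'.2 = q.2 - k * (p : ℤ) ^ n

/-- `A : ℤ → ℕ → K` records the coefficients of the expansion
`β = Σ_{(i,j) ∈ ℱ} A i j · π_L^i ⊗ π_L^j` with Teichmüller coefficients: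
writing `β = Σ_{0 ≤ j < p^n} c_j ⊗ π_L^j`, each `c_j` is the convergent sum
`Σ_i A i j π_L^i` (partial sums up to `m` approximate `c_j` within `M_L^{m+1}`). -/
def IsExpansion (p n : ℕ) (K L : Type) [Field K] [Field L] [Algebra K L]
    (vL : L → WithTop ℤ) (𝒯 : Set K) (πL : L) (β : L ⊗[K] L) (A : ℤ → ℕ → K) : Prop :=
  (∀ (i : ℤ) (j : ℕ), A i j ∈ 𝒯) ∧
  ∃ N : ℕ → ℤ, ∃ c : ℕ → L,
    (∀ (j : ℕ) (i : ℤ), i < N j → A i j = 0) ∧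
    β = ∑ j ∈ Finset.range (p ^ n), c j ⊗ₜ[K] (πL ^ j) ∧
    (∀ j : ℕ, j < p ^ n → ∀ m : ℤ,
      (m : WithTop ℤ) <
        vL (c j - ∑ i ∈ Finset.Icc (N j) m, algebraMap K L (A i j) * πL ^ (i : ℤ)))

/-- `R(β)`: the classes `[i,j]`, `(i,j) ∈ ℱ`, with `a_{ij} ≠ 0`. -/
def Rset (p n : ℕ) {K : Type} [Field K] (A : ℤ → ℕ → K) : Set (ℤ × ℤ) :=
  {q | ∃ (i : ℤ) (j : ℕ), j < p ^ n ∧ A i j ≠ 0 ∧ q = (i, (j : ℤ))}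

/-- `D(β)`: the diagram of `β` (upward closure of `R(β)`). -/
def Dset (p n : ℕ) {K : Type} [Field K] (A : ℤ → ℕ → K) : Set (ℤ × ℤ) :=
  {q | ∃ r ∈ Rset p n A, cosetLE p n r q}

/-- `G(β)`: the minimal elements of `D(β)`. -/
def Gset (p n : ℕ) {K : Type} [Field K] (A : ℤ → ℕ → K) : Set (ℤ × ℤ) :=
  {q | q ∈ Dset p n A ∧ ∀ q' ∈ Dset p n A, cosetLE p n q' q → cosetLE p n q q'}

/-- `dval = d(β) = min {i + j : [i,j] ∈ D(β)}`. -/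
def IsDval (p n : ℕ) {K : Type} [Field K] (A : ℤ → ℕ → K) (dval : ℤ) : Prop :=
  IsLeast {v : ℤ | ∃ q ∈ Dset p n A, q.1 + q.2 = v} dval

/-- `N(β)`: the diagonal of `β`. -/
def Nset (p n : ℕ) {K : Type} [Field K] (A : ℤ → ℕ → K) (dval : ℤ) : Set (ℤ × ℤ) :=
  {q | q ∈ Dset p n A ∧ q.1 + q.2 = dval}

/-- `|N(β)| = 2` (as a set of cosets mod `H`). -/
def NTwoCosets (p n : ℕ) {K : Type} [Field K] (A : ℤ → ℕ → K) (dval : ℤ) : Prop :=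
  ∃ q₁ ∈ Nset p n A dval, ∃ q₂ ∈ Nset p n A dval, ¬ cosetEq p n q₁ q₂ ∧
    ∀ q ∈ Nset p n A dval, cosetEq p n q q₁ ∨ cosetEq p n q q₂

/-- `L/K` is semistable: there is `β ∈ L ⊗_K L` with `φ(β) ∈ K[G]`,
`p ∤ d(β)` and `|N(β)| = 2`. -/
def Semistable (p n : ℕ) (K L : Type) [Field K] [Field L] [Algebra K L]
    [FiniteDimensional K L] (vL : L → WithTop ℤ) (𝒯 : Set K) (πL : L) : Prop :=
  ∃ (β : L ⊗[K] L) (A : ℤ → ℕ → K) (dval : ℤ),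
    IsExpansion p n K L vL 𝒯 πL β A ∧ PhiInKG K L β ∧
    IsDval p n A dval ∧ ¬ ((p : ℤ) ∣ dval) ∧ NTwoCosets p n A dval

/-- `L/K` is semistable with precision `c`. -/
def SemistableWithPrec (p n : ℕ) (K L : Type) [Field K] [Field L] [Algebra K L]
    [FiniteDimensional K L] (vL : L → WithTop ℤ) (𝒯 : Set K) (πL : L) (c : ℕ) : Prop :=
  ∃ (β : L ⊗[K] L) (A : ℤ → ℕ → K) (dval : ℤ),
    IsExpansion p n K L vL 𝒯 πL β A ∧ PhiInKG K L β ∧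
    IsDval p n A dval ∧ ¬ ((p : ℤ) ∣ dval) ∧ NTwoCosets p n A dval ∧
    ∀ q ∈ Gset p n A, q ∉ Nset p n A dval → dval + c ≤ q.1 + q.2

/-- `L/K` is stable: semistable with `β` chosen so that `G(β) = N(β)`. -/
def Stable (p n : ℕ) (K L : Type) [Field K] [Field L] [Algebra K L]
    [FiniteDimensional K L] (vL : L → WithTop ℤ) (𝒯 : Set K) (πL : L) : Prop :=
  ∃ (β : L ⊗[K] L) (A : ℤ → ℕ → K) (dval : ℤ),
    IsExpansion p n K L vL 𝒯 πL β A ∧ PhiInKG K L β ∧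
    IsDval p n A dval ∧ ¬ ((p : ℤ) ∣ dval) ∧ NTwoCosets p n A dval ∧
    Gset p n A = Nset p n A dval

/-- `d` is the valuation of the different of `L/K`: the largest `d` such that
every `x` with `v_L(x) ≥ -d` has trace in `O_K`. -/
def IsDifferentExp (K L : Type) [Field K] [Field L] [Algebra K L]
    [FiniteDimensional K L] (vL : L → WithTop ℤ) (d : ℤ) : Prop :=
  IsGreatest {m : ℤ | ∀ x : L, ((-m : ℤ) : WithTop ℤ) ≤ vL x →
    (0 : WithTop ℤ) ≤ vL (algebraMap K L (Algebra.trace K L x))} d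

end


section AuxV
variable {L : Type} [Field L] {vL : L → WithTop ℤ}

lemma IsNormValuation.v0 (hv : IsNormValuation vL) : vL 0 = ⊤ := hv.1

lemma IsNormValuation.ne_top (hv : IsNormValuation vL) {x : L} (hx : x ≠ 0) : vL x ≠ ⊤ :=
  hv.2.1 x hx

lemma IsNormValuation.vmul (hv : IsNormValuation vL) (x y : L) : vL (x * y) = vL x + vL y :=
  hv.2.2.1 x y

lemma IsNormValuation.vadd (hv : IsNormValuation vL) (x y : L) :
    min (vL x) (vL y) ≤ vL (x + y) := hv.2.2.2.1 x y

lemma IsNormValuation.eq_top_iff (hv : IsNormValuation vL) {x : L} : vL x = ⊤ ↔ x = 0 := by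
  constructor
  · intro h; by_contra hx; exact hv.ne_top hx h
  · rintro rfl; exact hv.1

lemma IsNormValuation.exists_int (hv : IsNormValuation vL) {x : L} (hx : x ≠ 0) :
    ∃ m : ℤ, vL x = (m : WithTop ℤ) := by
  rcases WithTop.ne_top_iff_exists.mp (hv.ne_top hx) with ⟨m, hm⟩
  exact ⟨m, hm.symm⟩

lemma IsNormValuation.vone (hv : IsNormValuation vL) : vL 1 = 0 := by
  rcases hv.exists_int (one_ne_zero (α := L)) with ⟨m, hm⟩
  have h := hv.vmul 1 1
  rw [one_mul, hm] at h
  have h2 : m = m + m := by exact_mod_cast h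
  have h3 : m = 0 := by omega
  rw [hm, h3]; rfl

lemma IsNormValuation.vneg (hv : IsNormValuation vL) (x : L) : vL (-x) = vL x := by
  rcases eq_or_ne x 0 with rfl | hx
  · simp
  have hm1 : vL (-1 : L) = 0 := by
    rcases hv.exists_int (show (-1 : L) ≠ 0 by norm_num) with ⟨m, hm⟩
    have h := hv.vmul (-1) (-1)
    rw [neg_one_mul, neg_neg, hv.vone, hm] at h
    have h2 : (0 : ℤ) = m + m := by exact_mod_cast h
    have h3 : m = 0 := by omega
    rw [hm, h3]; rfl
  have : -x = (-1 : L) * x := by ring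
  rw [this, hv.vmul, hm1, zero_add]

lemma IsNormValuation.vadd_left (hv : IsNormValuation vL) {x y : L} (h : vL x < vL y) :
    vL (x + y) = vL x := by
  have h1 : vL x ≤ vL (x + y) := by
    have := hv.vadd x y
    rwa [min_eq_left h.le] at this
  refine le_antisymm ?_ h1
  by_contra hc
  push_neg at hc
  have hx : x = (x + y) + (-y) := by ring
  have h2 := hv.vadd (x + y) (-y)
  rw [← hx, hv.vneg y] at h2
  have h3 : vL x < min (vL (x + y)) (vL y) := lt_min hc h
  exact absurd h2 (not_le.mpr h3)

lemma IsNormValuation.vsum_ge (hv : IsNormValuation vL) {ι : Type*} (s : Finset ι) (f : ι → L)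
    (M : WithTop ℤ) (h : ∀ i ∈ s, M ≤ vL (f i)) : M ≤ vL (∑ i ∈ s, f i) := by
  classical
  induction s using Finset.cons_induction with
  | empty => simp [hv.v0]
  | cons a s ha ih =>
    rw [Finset.sum_cons]
    refine le_trans (le_min (h a (Finset.mem_cons_self a s))
      (ih fun i hi => h i (Finset.mem_cons.mpr (Or.inr hi)))) (hv.vadd _ _)

lemma IsNormValuation.vsum_min (hv : IsNormValuation vL) {ι : Type*} (s : Finset ι) (f : ι → L)
    (hdist : ∀ i ∈ s, ∀ j ∈ s, i ≠ j → f i ≠ 0 → f j ≠ 0 → vL (f i) ≠ vL (f j)) :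
    (vL (∑ j ∈ s, f j) = ⊤ ∧ ∀ i ∈ s, vL (f i) = ⊤) ∨
      ∃ i ∈ s, vL (∑ j ∈ s, f j) = vL (f i) ∧ vL (f i) ≠ ⊤ ∧ ∀ i' ∈ s, vL (f i) ≤ vL (f i') := by
  classical
  induction s using Finset.cons_induction with
  | empty => exact Or.inl ⟨by simp [hv.v0], by simp⟩
  | cons a s ha ih =>
    have hdist' : ∀ i ∈ s, ∀ j ∈ s, i ≠ j → f i ≠ 0 → f j ≠ 0 → vL (f i) ≠ vL (f j) :=
      fun i hi j hj => hdist i (Finset.mem_cons.mpr (Or.inr hi)) j (Finset.mem_cons.mpr (Or.inr hj))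
    rw [Finset.sum_cons]
    rcases ih hdist' with ⟨htop, hall⟩ | ⟨i₀, hi₀s, hsum, hne, hmin⟩
    · have hs0 : (∑ j ∈ s, f j) = 0 := hv.eq_top_iff.mp htop
      rw [hs0, add_zero]
      by_cases hfa : vL (f a) = ⊤
      · refine Or.inl ⟨hfa, ?_⟩
        intro i hi
        rcases Finset.mem_cons.mp hi with rfl | hi
        · exact hfa
        · exact hall i hi
      · refine Or.inr ⟨a, Finset.mem_cons_self a s, rfl, hfa, ?_⟩
        intro i' hi'
        rcases Finset.mem_cons.mp hi' with rfl | hi'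
        · exact le_refl _
        · rw [hall i' hi']; exact le_top
    · by_cases hfa : vL (f a) = ⊤
      · have hfa0 : f a = 0 := hv.eq_top_iff.mp hfa
        rw [hfa0, zero_add]
        refine Or.inr ⟨i₀, Finset.mem_cons.mpr (Or.inr hi₀s), hsum, hne, ?_⟩
        intro i' hi'
        rcases Finset.mem_cons.mp hi' with rfl | hi'
        · rw [hfa]; exact le_top
        · exact hmin i' hi'
      · have hane : a ≠ i₀ := fun h => ha (h ▸ hi₀s)
        have hfa0 : f a ≠ 0 := fun h => hfa (hv.eq_top_iff.mpr h)
        have hfi0 : f i₀ ≠ 0 := fun h => hne (hv.eq_top_iff.mpr h)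
        have hneq : vL (f a) ≠ vL (f i₀) :=
          hdist a (Finset.mem_cons_self a s) i₀ (Finset.mem_cons.mpr (Or.inr hi₀s)) hane hfa0 hfi0
        rcases lt_or_gt_of_ne hneq with hlt | hgt
        · have : vL (f a + ∑ j ∈ s, f j) = vL (f a) := by
            apply hv.vadd_left; rw [hsum]; exact hlt
          refine Or.inr ⟨a, Finset.mem_cons_self a s, this, hfa, ?_⟩
          intro i' hi'
          rcases Finset.mem_cons.mp hi' with rfl | hi'
          · exact le_refl _
          · exact le_trans hlt.le (hmin i' hi')
        · have : vL (f a + ∑ j ∈ s, f j) = vL (f i₀) := by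
            rw [add_comm, ← hsum]
            apply hv.vadd_left; rw [hsum]; exact hgt
          refine Or.inr ⟨i₀, Finset.mem_cons.mpr (Or.inr hi₀s), this, hne, ?_⟩
          intro i' hi'
          rcases Finset.mem_cons.mp hi' with rfl | hi'
          · exact hgt.le
          · exact hmin i' hi'

lemma IsNormValuation.vsum_le (hv : IsNormValuation vL) {ι : Type*} (s : Finset ι) (f : ι → L)
    (hdist : ∀ i ∈ s, ∀ j ∈ s, i ≠ j → f i ≠ 0 → f j ≠ 0 → vL (f i) ≠ vL (f j)) :
    ∀ i ∈ s, vL (∑ j ∈ s, f j) ≤ vL (f i) := by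
  intro i hi
  rcases hv.vsum_min s f hdist with ⟨htop, hall⟩ | ⟨i₀, hi₀s, hsum, hne, hmin⟩
  · rw [htop, hall i hi]
  · rw [hsum]; exact hmin i hi

lemma IsNormValuation.vpow (hv : IsNormValuation vL) {x : L} {m : ℤ}
    (hx : vL x = (m : WithTop ℤ)) : ∀ j : ℕ, vL (x ^ j) = ((j * m : ℤ) : WithTop ℤ) := by
  intro j
  induction j with
  | zero => simpa using hv.vone
  | succ k ih =>
    rw [pow_succ, hv.vmul, ih, hx, ← WithTop.coe_add]
    congr 1
    push_cast
    ring

lemma IsNormValuation.vinv (hv : IsNormValuation vL) {x : L} {m : ℤ}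
    (hx : vL x = (m : WithTop ℤ)) : vL x⁻¹ = ((-m : ℤ) : WithTop ℤ) := by
  have hx0 : x ≠ 0 := by
    intro h; rw [h, hv.v0] at hx; exact (WithTop.top_ne_coe) hx
  have h1 : vL (x * x⁻¹) = 0 := by rw [mul_inv_cancel₀ hx0, hv.vone]
  rcases hv.exists_int (inv_ne_zero hx0) with ⟨m', hm'⟩
  rw [hv.vmul, hx, hm'] at h1
  have h2 : m + m' = 0 := by exact_mod_cast h1
  rw [hm']
  congr 1
  omega

lemma IsNormValuation.vzpow (hv : IsNormValuation vL) {x : L} {m : ℤ}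
    (hx : vL x = (m : WithTop ℤ)) : ∀ t : ℤ, vL (x ^ t) = ((t * m : ℤ) : WithTop ℤ) := by
  intro t
  cases t with
  | ofNat k =>
    rw [Int.ofNat_eq_coe, zpow_natCast]
    simpa using hv.vpow hx k
  | negSucc k =>
    rw [zpow_negSucc]
    have := hv.vpow hx (k + 1)
    rw [hv.vinv this]
    congr 1
    push_cast [Int.negSucc_eq]
    ring

end AuxV

section AuxG

lemma int_residue {g i j m m' : ℤ} (hg : 0 < g) (hi0 : 0 ≤ i) (hig : i < g)
    (hj0 : 0 ≤ j) (hjg : j < g) (h : g * m + i = g * m' + j) : i = j := by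
  have h2 : g * (m' - m) = i - j := by rw [mul_sub]; linarith
  rcases lt_trichotomy (m' - m) 0 with hc | hc | hc
  · have h3 : m' - m ≤ -1 := by omega
    have h4 : g * (m' - m) ≤ g * (-1) := mul_le_mul_of_nonneg_left h3 hg.le
    linarith
  · rw [hc, mul_zero] at h2; omega
  · have h3 : (1 : ℤ) ≤ m' - m := by omega
    have h4 : g * 1 ≤ g * (m' - m) := mul_le_mul_of_nonneg_left h3 hg.le
    linarith

variable {K L : Type} [Field K] [Field L] [Algebra K L] {vL : L → WithTop ℤ}

lemma li_pows (hv : IsNormValuation vL) {πL : L} (hπ : vL πL = ((1 : ℤ) : WithTop ℤ))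
    {g : ℕ} (hg : 0 < g)
    (hsub : ∀ k : K, k ≠ 0 → ∃ m : ℤ, vL (algebraMap K L k) = (((g : ℤ) * m : ℤ) : WithTop ℤ)) :
    LinearIndependent K (fun i : Fin g => πL ^ (i : ℕ)) := by
  classical
  have hπ0 : πL ≠ 0 := by
    intro h; rw [h, hv.v0] at hπ; exact WithTop.top_ne_coe hπ
  rw [Fintype.linearIndependent_iff]
  intro coef hcoef
  by_contra hne
  push_neg at hne
  obtain ⟨i₀, hi₀⟩ := hne
  set f : Fin g → L := fun i => coef i • πL ^ (i : ℕ) with hf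
  have hfval : ∀ i : Fin g, coef i ≠ 0 → ∃ m : ℤ,
      vL (f i) = (((g : ℤ) * m + (i : ℤ) : ℤ) : WithTop ℤ) := by
    intro i hi
    obtain ⟨m, hm⟩ := hsub (coef i) hi
    refine ⟨m, ?_⟩
    show vL (coef i • πL ^ (i : ℕ)) = _
    rw [Algebra.smul_def, hv.vmul, hm, hv.vpow hπ, ← WithTop.coe_add]
    congr 1
    push_cast
    ring
  have hfne : ∀ i : Fin g, f i ≠ 0 → coef i ≠ 0 := by
    intro i hi hc
    exact hi (by simp [hf, hc])
  have hdist : ∀ i ∈ Finset.univ, ∀ j ∈ Finset.univ, i ≠ j → f i ≠ 0 → f j ≠ 0 →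
      vL (f i) ≠ vL (f j) := by
    intro i _ j _ hij hfi hfj
    obtain ⟨m, hm⟩ := hfval i (hfne i hfi)
    obtain ⟨m', hm'⟩ := hfval j (hfne j hfj)
    rw [hm, hm']
    intro h
    have h2 : (g : ℤ) * m + (i : ℤ) = (g : ℤ) * m' + (j : ℤ) := by exact_mod_cast h
    have h3 : (i : ℤ) = (j : ℤ) := int_residue (by exact_mod_cast hg) (by positivity)
      (by exact_mod_cast i.2) (by positivity) (by exact_mod_cast j.2) h2
    exact hij (Fin.ext (by exact_mod_cast h3))
  have hle := hv.vsum_le Finset.univ f hdist i₀ (Finset.mem_univ i₀)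
  have hsum0 : (∑ j : Fin g, f j) = 0 := hcoef
  rw [hsum0, hv.v0] at hle
  have hfi₀ : f i₀ ≠ 0 := by
    simp only [hf]
    exact smul_ne_zero hi₀ (pow_ne_zero _ hπ0)
  exact hv.ne_top hfi₀ (top_le_iff.mp hle)

lemma exists_valK {e : ℤ} (he : 0 < e) (hv : IsNormValuation vL)
    {πL : L} (hπ : vL πL = ((1 : ℤ) : WithTop ℤ))
    [FiniteDimensional K L] (hfin : (Module.finrank K L : ℤ) = e)
    (hK : ∀ k : K, k ≠ 0 → ∃ m : ℤ, vL (algebraMap K L k) = ((e * m : ℤ) : WithTop ℤ))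
    (k₀ : K) (hk₀ : k₀ ≠ 0) (hk₀v : vL (algebraMap K L k₀) ≠ ((0 : ℤ) : WithTop ℤ)) :
    ∀ t : ℤ, ∃ k : K, k ≠ 0 ∧ vL (algebraMap K L k) = ((e * t : ℤ) : WithTop ℤ) := by
  classical
  set P : ℤ → Prop := fun v => ∃ k : K, k ≠ 0 ∧ vL (algebraMap K L k) = (v : WithTop ℤ) with hP
  have hP0 : P 0 := ⟨1, one_ne_zero, by rw [map_one, hv.vone]; rfl⟩
  have hPadd : ∀ v w : ℤ, P v → P w → P (v + w) := by
    rintro v w ⟨k, hk, hkv⟩ ⟨k', hk', hkv'⟩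
    exact ⟨k * k', mul_ne_zero hk hk', by rw [map_mul, hv.vmul, hkv, hkv', WithTop.coe_add]⟩
  have hPneg : ∀ v : ℤ, P v → P (-v) := by
    rintro v ⟨k, hk, hkv⟩
    refine ⟨k⁻¹, inv_ne_zero hk, ?_⟩
    rw [map_inv₀]
    exact hv.vinv hkv
  have hPmulnat : ∀ v : ℤ, P v → ∀ t : ℕ, P (t * v) := by
    intro v hPv t
    induction t with
    | zero => simpa using hP0
    | succ s ih =>
      have := hPadd _ _ ih hPv
      have he' : ((s : ℤ) + 1) * v = (s : ℤ) * v + v := by ring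
      rw [show ((s + 1 : ℕ) : ℤ) = (s : ℤ) + 1 by push_cast; ring, he']
      exact this
  have hPmul : ∀ v : ℤ, P v → ∀ t : ℤ, P (t * v) := by
    intro v hPv t
    cases t with
    | ofNat s => exact hPmulnat v hPv s
    | negSucc s =>
      have := hPneg _ (hPmulnat v hPv (s + 1))
      rw [show (Int.negSucc s) * v = -(((s + 1 : ℕ) : ℤ) * v) by
        rw [Int.negSucc_eq]; push_cast; ring]
      exact this
  -- the valuation of k₀
  obtain ⟨m₀, hm₀⟩ := hK k₀ hk₀
  have hm₀ne : e * m₀ ≠ 0 := by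
    intro h; rw [h] at hm₀; exact hk₀v hm₀
  have hPv₀ : P (e * m₀) := ⟨k₀, hk₀, hm₀⟩
  -- least positive element
  have hex : ∃ z : ℤ, 0 < z ∧ P z := by
    rcases lt_trichotomy (e * m₀) 0 with hc | hc | hc
    · exact ⟨-(e * m₀), by omega, hPneg _ hPv₀⟩
    · exact absurd hc hm₀ne
    · exact ⟨e * m₀, hc, hPv₀⟩
  obtain ⟨g, ⟨hgpos, hgP⟩, hgleast⟩ :=
    Int.exists_least_of_bdd (P := fun z => 0 < z ∧ P z) ⟨1, fun z hz => hz.1⟩ hex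
  -- every element of P is a multiple of g
  have hgdvd : ∀ v : ℤ, P v → ∃ m : ℤ, v = g * m := by
    intro v hPv
    have h1 := Int.emod_nonneg v (ne_of_gt hgpos)
    have h2 := Int.emod_lt_of_pos v hgpos
    have h3 : v % g = v + (-(v / g)) * g := by
      have := Int.mul_ediv_add_emod v g
      linarith
    have hPr : P (v % g) := by
      rw [h3]
      exact hPadd _ _ hPv (hPmul g hgP _)
    rcases eq_or_lt_of_le h1 with heq | hlt
    · refine ⟨v / g, ?_⟩
      have h4 := Int.mul_ediv_add_emod v g
      omega
    · exact absurd (hgleast _ ⟨hlt, hPr⟩) (by omega)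
  -- g ≤ e via linear independence
  have hsub' : ∀ k : K, k ≠ 0 → ∃ m : ℤ,
      vL (algebraMap K L k) = (((g.toNat : ℤ) * m : ℤ) : WithTop ℤ) := by
    intro k hk
    have hkL : algebraMap K L k ≠ 0 := by
      simpa using (map_ne_zero (algebraMap K L)).mpr hk
    obtain ⟨v, hvk⟩ := hv.exists_int hkL
    obtain ⟨m, hm⟩ := hgdvd v ⟨k, hk, hvk⟩
    refine ⟨m, ?_⟩
    rw [hvk, hm, Int.toNat_of_nonneg hgpos.le]
  have hli := li_pows (K := K) hv hπ (g := g.toNat) (by omega) hsub'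
  have hcard := hli.fintype_card_le_finrank
  rw [Fintype.card_fin] at hcard
  have hge : g ≤ e := by
    have : (g.toNat : ℤ) ≤ (Module.finrank K L : ℤ) := by exact_mod_cast hcard
    rw [hfin, Int.toNat_of_nonneg hgpos.le] at this
    exact this
  -- e ≤ g
  obtain ⟨kg, hkg, hkgv⟩ := id hgP
  obtain ⟨mg, hmg⟩ := hK kg hkg
  have hgeq : g = e * mg := by
    rw [hkgv] at hmg
    exact_mod_cast hmg
  have hle : e ≤ g := Int.le_of_dvd hgpos ⟨mg, hgeq⟩
  have hge' : g = e := le_antisymm hge hle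
  intro t
  have := hPmul g hgP t
  rw [hge'] at this
  rw [show e * t = t * e by ring]
  exact this

end AuxG

section AuxD
variable {K L : Type} [Field K] [Field L] [Algebra K L] {vL : L → WithTop ℤ}

lemma dual_family [FiniteDimensional K L] [IsGalois K L] (hv : IsNormValuation vL)
    {e : ℕ} (he : 0 < e) (hfin : Module.finrank K L = e)
    {πL : L} (hπ : vL πL = ((1 : ℤ) : WithTop ℤ))
    (hK : ∀ k : K, k ≠ 0 → ∃ m : ℤ, vL (algebraMap K L k) = (((e : ℤ) * m : ℤ) : WithTop ℤ))
    {d : ℤ}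
    (hx₀ : ∃ x₀ : L, ((-(d + 1) : ℤ) : WithTop ℤ) ≤ vL x₀ ∧
      ¬ (0 : WithTop ℤ) ≤ vL (algebraMap K L (Algebra.trace K L x₀))) :
    ∃ D : ℕ → L, ∀ j, j < e →
      ((((e : ℤ) - 1 - d - (j : ℤ)) : ℤ) : WithTop ℤ) ≤ vL (D j) ∧
      ∀ i, i < e → Algebra.trace K L (πL ^ i * D j) = if i = j then 1 else 0 := by
  classical
  obtain ⟨x₀, hx₀v, hx₀t⟩ := hx₀
  have hli := li_pows (K := K) hv hπ (g := e) he hK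
  have hne : Nonempty (Fin e) := ⟨⟨0, he⟩⟩
  set B : Module.Basis (Fin e) K L :=
    basisOfLinearIndependentOfCardEqFinrank hli (by simp [hfin]) with hBdef
  have hBi : ∀ i : Fin e, B i = πL ^ (i : ℕ) := by
    intro i
    rw [hBdef, coe_basisOfLinearIndependentOfCardEqFinrank]
  set Df : Fin e → L :=
    ⇑((Algebra.traceForm K L).dualBasis (traceForm_nondegenerate K L) B) with hDdef
  have hD : ∀ i j : Fin e, Algebra.trace K L (πL ^ (i : ℕ) * Df j) =
      if i = j then 1 else 0 := by
    intro i j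
    have h1 := LinearMap.BilinForm.apply_dualBasis_left (B := Algebra.traceForm K L)
      (traceForm_nondegenerate K L) B j i
    rw [Algebra.traceForm_apply, hBi i] at h1
    rw [mul_comm]
    exact h1
  -- lower bound for valuations of the dual family
  have hbound : ∀ j : Fin e, ((((e : ℤ) - 1 - d - (j : ℤ)) : ℤ) : WithTop ℤ) ≤ vL (Df j) := by
    intro j
    by_contra hlt
    push_neg at hlt
    have hDj0 : Df j ≠ 0 := by
      intro h0
      have h1 := hD j j
      rw [h0, mul_zero, map_zero] at h1
      simp at h1
    obtain ⟨v, hvD⟩ := hv.exists_int hDj0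
    have hvle : v ≤ (e : ℤ) - 2 - d - (j : ℤ) := by
      rw [hvD] at hlt
      have := WithTop.coe_lt_coe.mp hlt
      omega
    set w := x₀ * (Df j)⁻¹ with hw
    have hwv : (((j : ℤ) - (e : ℤ) + 1 : ℤ) : WithTop ℤ) ≤ vL w := by
      rw [hw, hv.vmul, hv.vinv hvD]
      calc (((j : ℤ) - (e : ℤ) + 1 : ℤ) : WithTop ℤ)
          ≤ ((-(d + 1) + (-v) : ℤ) : WithTop ℤ) := WithTop.coe_le_coe.mpr (by omega)
        _ = ((-(d + 1) : ℤ) : WithTop ℤ) + ((-v : ℤ) : WithTop ℤ) := WithTop.coe_add _ _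
        _ ≤ vL x₀ + ((-v : ℤ) : WithTop ℤ) := add_le_add_left hx₀v _
    have hxw : x₀ = w * Df j := by
      rw [hw, mul_assoc, inv_mul_cancel₀ hDj0, mul_one]
    -- trace of x₀ equals the j-th coordinate of w
    have htr_eq : Algebra.trace K L x₀ = B.repr w j := by
      rw [hxw]
      conv_lhs => rw [← B.sum_repr w]
      rw [Finset.sum_mul]
      simp_rw [smul_mul_assoc]
      rw [map_sum]
      simp_rw [map_smul]
      have : ∀ i : Fin e, Algebra.trace K L (B i * Df j) = if i = j then 1 else 0 := by
        intro i; rw [hBi i]; exact hD i j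
      simp only [this, smul_eq_mul, mul_ite, mul_one, mul_zero]
      rw [Finset.sum_ite_eq' Finset.univ j]
      simp
    -- the coordinates of w have valuation at least vL w
    have hdist : ∀ i ∈ Finset.univ, ∀ i' ∈ Finset.univ, i ≠ i' →
        (B.repr w i • B i) ≠ 0 → (B.repr w i' • B i') ≠ 0 →
        vL (B.repr w i • B i) ≠ vL (B.repr w i' • B i') := by
      intro i _ i' _ hii' hfi hfi'
      have hci : B.repr w i ≠ 0 := fun h => hfi (by simp [h])
      have hci' : B.repr w i' ≠ 0 := fun h => hfi' (by simp [h])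
      obtain ⟨m, hm⟩ := hK _ hci
      obtain ⟨m', hm'⟩ := hK _ hci'
      have hvi : vL (B.repr w i • B i) = (((e : ℤ) * m + (i : ℤ) : ℤ) : WithTop ℤ) := by
        rw [hBi i, Algebra.smul_def, hv.vmul, hm, hv.vpow hπ, ← WithTop.coe_add]
        congr 1; push_cast; ring
      have hvi' : vL (B.repr w i' • B i') = (((e : ℤ) * m' + (i' : ℤ) : ℤ) : WithTop ℤ) := by
        rw [hBi i', Algebra.smul_def, hv.vmul, hm', hv.vpow hπ, ← WithTop.coe_add]
        congr 1; push_cast; ring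
      rw [hvi, hvi']
      intro hcontra
      have h2 : (e : ℤ) * m + (i : ℤ) = (e : ℤ) * m' + (i' : ℤ) := by exact_mod_cast hcontra
      have h3 : (i : ℤ) = (i' : ℤ) := int_residue (by exact_mod_cast he) (by positivity)
        (by exact_mod_cast i.2) (by positivity) (by exact_mod_cast i'.2) h2
      exact hii' (Fin.ext (by exact_mod_cast h3))
    have hwle := hv.vsum_le Finset.univ (fun i => B.repr w i • B i) hdist j (Finset.mem_univ j)
    rw [B.sum_repr w] at hwle
    by_cases hc0 : B.repr w j = 0
    · rw [hc0] at htr_eq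
      rw [htr_eq, map_zero, hv.v0] at hx₀t
      exact hx₀t le_top
    · obtain ⟨m, hm⟩ := hK _ hc0
      have hvj : vL (B.repr w j • B j) = (((e : ℤ) * m + (j : ℤ) : ℤ) : WithTop ℤ) := by
        rw [hBi j, Algebra.smul_def, hv.vmul, hm, hv.vpow hπ, ← WithTop.coe_add]
        congr 1; push_cast; ring
      have hchain : (((j : ℤ) - (e : ℤ) + 1 : ℤ) : WithTop ℤ) ≤
          (((e : ℤ) * m + (j : ℤ) : ℤ) : WithTop ℤ) := by
        rw [← hvj]
        exact le_trans hwv hwle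
      have hint : (j : ℤ) - (e : ℤ) + 1 ≤ (e : ℤ) * m + (j : ℤ) := WithTop.coe_le_coe.mp hchain
      have hm0 : 0 ≤ m := by
        by_contra hmneg
        push_neg at hmneg
        have : m ≤ -1 := by omega
        have h4 : (e : ℤ) * m ≤ (e : ℤ) * (-1) :=
          mul_le_mul_of_nonneg_left this (by positivity)
        have he' : (0 : ℤ) < (e : ℤ) := by exact_mod_cast he
        linarith
    -- trace of x₀ is integral, contradiction
      apply hx₀t
      rw [htr_eq, hm]
      have : ((0 : ℤ) : WithTop ℤ) ≤ (((e : ℤ) * m : ℤ) : WithTop ℤ) := by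
        apply WithTop.coe_le_coe.mpr
        positivity
      exact this
  refine ⟨fun j => if h : j < e then Df ⟨j, h⟩ else 0, ?_⟩
  intro j hj
  constructor
  · simpa [hj] using hbound ⟨j, hj⟩
  · intro i hi
    have := hD ⟨i, hi⟩ ⟨j, hj⟩
    simp only [hj, dif_pos] at *
    rw [this]
    congr 1
    simp [Fin.ext_iff]
end AuxD


/-- Corollary 3.5 (fxi). -/
theorem stmt_4 (p n : ℕ) (hp : p.Prime) (hn : 1 ≤ n)
    (K L : Type) [Field K] [Field L] [Algebra K L] [IsGalois K L] [FiniteDimensional K L]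
    (hdeg : Nat.card (L ≃ₐ[K] L) = p ^ n)
    (vL : L → WithTop ℤ) (hctx : LocalCtx p n K L vL)
    (πL : L) (hπ : vL πL = 1) (𝒯 : Set K) (h𝒯 : IsTeichmuller K L vL 𝒯)
    (d : ℤ) (hd : IsDifferentExp K L vL d)
    (ξ : MonoidAlgebra K (L ≃ₐ[K] L)) (hξ : ξ ≠ 0)
    (β : L ⊗[K] L) (A : ℤ → ℕ → K) (hA : IsExpansion p n K L vL 𝒯 πL β A)
    (hphiβ : ∀ σ : L ≃ₐ[K] L, phi K L β σ = algebraMap K L (ξ.coeff σ))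
    (fξ : ℤ → ℤ)
    (hf : ∀ m : ℤ, IsLeast
      {v : WithTop ℤ | ∃ y : L, (m : WithTop ℤ) ≤ vL y ∧ vL (actK K L ξ y) = v}
      ((fξ m : ℤ) : WithTop ℤ))
    (a b : ℤ) :
    (a, b) ∈ Gset p n A ↔
      (fξ (-b - (d - (p : ℤ) ^ n + 1)) = a ∧
        a < fξ (-b - (d - (p : ℤ) ^ n + 1) + 1)) := by
  classical
  obtain ⟨hv, hgal, hKgrp, hcompl, hperf⟩ := hctx
  obtain ⟨hT, N, c, hN, hβ, happrox⟩ := hA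
  have hepos : 0 < p ^ n := pow_pos hp.pos n
  have hEpos : (0 : ℤ) < (p : ℤ) ^ n := pow_pos (by exact_mod_cast hp.pos) n
  have hπ' : vL πL = ((1 : ℤ) : WithTop ℤ) := by exact_mod_cast hπ
  have hπn : ∀ j : ℕ, vL (πL ^ j) = ((j : ℤ) : WithTop ℤ) := fun j => by
    simpa using hv.vpow hπ' j
  have hπz : ∀ i : ℤ, vL (πL ^ i) = (i : WithTop ℤ) := fun i => by
    simpa using hv.vzpow hπ' i
  have hfin : Module.finrank K L = p ^ n := by
    rw [← IsGalois.card_aut_eq_finrank K L]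
    exact hdeg
  have hKe : ∀ k : K, k ≠ 0 → ∃ m : ℤ,
      vL (algebraMap K L k) = ((((p ^ n : ℕ) : ℤ) * m : ℤ) : WithTop ℤ) := by
    intro k hk
    obtain ⟨m, hm⟩ := hKgrp k hk
    exact ⟨m, by rw [hm]; congr 1⟩
  have hx₀ : ∃ x₀ : L, ((-(d + 1) : ℤ) : WithTop ℤ) ≤ vL x₀ ∧
      ¬ (0 : WithTop ℤ) ≤ vL (algebraMap K L (Algebra.trace K L x₀)) := by
    by_contra hcon
    push_neg at hcon
    have hmem : (d + 1) ∈ {m : ℤ | ∀ x : L, ((-m : ℤ) : WithTop ℤ) ≤ vL x →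
        (0 : WithTop ℤ) ≤ vL (algebraMap K L (Algebra.trace K L x))} := by
      intro x hx
      exact hcon x hx
    have := hd.2 hmem
    omega
  obtain ⟨x₀, hx₀v, hx₀t⟩ := hx₀
  have hk₀ : Algebra.trace K L x₀ ≠ 0 := by
    intro h
    rw [h, map_zero, hv.v0] at hx₀t
    exact hx₀t le_top
  have hk₀v : vL (algebraMap K L (Algebra.trace K L x₀)) ≠ ((0 : ℤ) : WithTop ℤ) := by
    intro h
    rw [h] at hx₀t
    exact hx₀t (le_refl _)
  have exV : ∀ t : ℤ, ∃ k : K, k ≠ 0 ∧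
      vL (algebraMap K L k) = (((p : ℤ) ^ n * t : ℤ) : WithTop ℤ) := by
    intro t
    obtain ⟨k, hk, hkv⟩ := exists_valK (e := ((p ^ n : ℕ) : ℤ))
      (by exact_mod_cast hepos) hv hπ' (by exact_mod_cast hfin) hKe _ hk₀ hk₀v t
    exact ⟨k, hk, by rw [hkv]; congr 1⟩
  obtain ⟨D, hD⟩ := dual_family hv hepos hfin hπ' hKe ⟨x₀, hx₀v, hx₀t⟩
  have hDlb : ∀ j : ℕ, j < p ^ n →
      ((((p : ℤ) ^ n - 1 - d - (j : ℤ)) : ℤ) : WithTop ℤ) ≤ vL (D j) := by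
    intro j hj
    have hcast : ((p : ℤ) ^ n - 1 - d - (j : ℤ)) = (((p ^ n : ℕ) : ℤ) - 1 - d - (j : ℤ)) := by
      push_cast; ring
    rw [hcast]
    exact (hD j hj).1
  -- valuations of the columns
  have col_ge : ∀ j : ℕ, j < p ^ n → ∀ M : ℤ, (∀ i : ℤ, A i j ≠ 0 → M ≤ i) →
      (M : WithTop ℤ) ≤ vL (c j) := by
    intro j hj M hM
    have h1 := happrox j hj M
    have h2 : (M : WithTop ℤ) ≤
        vL (∑ i ∈ Finset.Icc (N j) M, algebraMap K L (A i j) * πL ^ (i : ℤ)) := by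
      apply hv.vsum_ge
      intro i hi
      by_cases hAi : A i j = 0
      · rw [hAi, map_zero, zero_mul, hv.v0]
        exact le_top
      · rw [hv.vmul, h𝒯.2.1 _ (hT i j) hAi, hπz i, zero_add]
        exact WithTop.coe_le_coe.mpr (hM i hAi)
    have h3 : c j = (c j - ∑ i ∈ Finset.Icc (N j) M, algebraMap K L (A i j) * πL ^ (i : ℤ))
        + ∑ i ∈ Finset.Icc (N j) M, algebraMap K L (A i j) * πL ^ (i : ℤ) := by ring
    rw [h3]
    exact le_trans (le_min h1.le h2) (hv.vadd _ _)
  have col_eq : ∀ j : ℕ, j < p ^ n → ∀ i₀ : ℤ, A i₀ j ≠ 0 → (∀ i : ℤ, A i j ≠ 0 → i₀ ≤ i) →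
      vL (c j) = (i₀ : WithTop ℤ) := by
    intro j hj i₀ h0 hmin
    have hN0 : N j ≤ i₀ := by
      by_contra h
      exact h0 (hN j i₀ (by omega))
    have hPr : (∑ i ∈ Finset.Icc (N j) i₀, algebraMap K L (A i j) * πL ^ (i : ℤ)) =
        algebraMap K L (A i₀ j) * πL ^ (i₀ : ℤ) := by
      apply Finset.sum_eq_single_of_mem i₀ (Finset.mem_Icc.mpr ⟨hN0, le_refl _⟩)
      intro i hi hne
      have hiz : A i j = 0 := by
        by_contra hA0
        have h5 := hmin i hA0
        have h6 := (Finset.mem_Icc.mp hi).2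
        omega
      rw [hiz, map_zero, zero_mul]
    have hterm : vL (algebraMap K L (A i₀ j) * πL ^ (i₀ : ℤ)) = (i₀ : WithTop ℤ) := by
      rw [hv.vmul, h𝒯.2.1 _ (hT i₀ j) h0, hπz i₀, zero_add]
    have h1 := happrox j hj i₀
    rw [hPr] at h1
    have h3 : c j = algebraMap K L (A i₀ j) * πL ^ (i₀ : ℤ)
        + (c j - algebraMap K L (A i₀ j) * πL ^ (i₀ : ℤ)) := by ring
    rw [h3, hv.vadd_left (by rw [hterm]; exact h1)]
    exact hterm
  -- the action of ξ in terms of traces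
  have hphiAux : ∀ (σ : L ≃ₐ[K] L) (x z : L), phiAux K L σ (x ⊗ₜ[K] z) = x * σ z := by
    intro σ x z
    simp [phiAux, TensorProduct.lift.tmul, LinearMap.compl₂_apply, LinearMap.mul_apply',
      AlgEquiv.toLinearMap_apply]
  have hphi_apply : ∀ σ : L ≃ₐ[K] L,
      algebraMap K L (ξ.coeff σ) = ∑ j ∈ Finset.range (p ^ n), c j * σ (πL ^ j) := by
    intro σ
    rw [← hphiβ σ]
    simp only [phi, LinearMap.sum_apply, LinearMap.coe_comp, Function.comp_apply,
      Finsupp.lsingle_apply]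
    rw [Finsupp.finset_sum_apply]
    simp only [Finsupp.single_apply]
    rw [Finset.sum_ite_eq' Finset.univ σ]
    simp only [Finset.mem_univ, if_true]
    rw [hβ, map_sum]
    exact Finset.sum_congr rfl fun j _ => hphiAux σ (c j) (πL ^ j)
  have act_eq : ∀ y : L, actK K L ξ y =
      ∑ j ∈ Finset.range (p ^ n), c j * algebraMap K L (Algebra.trace K L (πL ^ j * y)) := by
    intro y
    unfold actK
    rw [Finsupp.sum_fintype _ _ (fun σ => by rw [map_zero, zero_mul])]
    calc (∑ σ : L ≃ₐ[K] L, algebraMap K L (ξ.coeff σ) * σ y)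
        = ∑ σ : L ≃ₐ[K] L, ∑ j ∈ Finset.range (p ^ n), c j * σ (πL ^ j) * σ y := by
          refine Finset.sum_congr rfl fun σ _ => ?_
          rw [hphi_apply σ, Finset.sum_mul]
      _ = ∑ j ∈ Finset.range (p ^ n), ∑ σ : L ≃ₐ[K] L, c j * σ (πL ^ j) * σ y :=
          Finset.sum_comm
      _ = ∑ j ∈ Finset.range (p ^ n), c j * algebraMap K L (Algebra.trace K L (πL ^ j * y)) := by
          refine Finset.sum_congr rfl fun j _ => ?_
          rw [trace_eq_sum_automorphisms, Finset.mul_sum]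
          refine Finset.sum_congr rfl fun σ _ => ?_
          rw [map_mul]
          ring
  have act_smul : ∀ (k : K) (y : L),
      actK K L ξ (algebraMap K L k * y) = algebraMap K L k * actK K L ξ y := by
    intro k y
    unfold actK
    rw [Finsupp.mul_sum]
    refine Finsupp.sum_congr fun σ _ => ?_
    rw [map_mul, AlgEquiv.commutes]
    ring
  -- trace valuation bound
  have trace_ge : ∀ (z : L) (t : ℤ),
      (((p : ℤ) ^ n * t - d : ℤ) : WithTop ℤ) ≤ vL z →
      (((p : ℤ) ^ n * t : ℤ) : WithTop ℤ) ≤ vL (algebraMap K L (Algebra.trace K L z)) := by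
    intro z t hz
    obtain ⟨k, hk0, hkv⟩ := exV t
    have hkL : algebraMap K L k ≠ 0 := by
      simpa using (map_ne_zero (algebraMap K L)).mpr hk0
    have hz' : ((-d : ℤ) : WithTop ℤ) ≤ vL ((algebraMap K L k)⁻¹ * z) := by
      rw [hv.vmul, hv.vinv hkv]
      calc ((-d : ℤ) : WithTop ℤ)
          = ((-((p : ℤ) ^ n * t) : ℤ) : WithTop ℤ) + (((p : ℤ) ^ n * t - d : ℤ) : WithTop ℤ) := by
            rw [← WithTop.coe_add]; congr 1; ring
        _ ≤ _ + vL z := add_le_add_right hz _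
    have h0 := hd.1 _ hz'
    have hzk : Algebra.trace K L z = k * Algebra.trace K L ((algebraMap K L k)⁻¹ * z) := by
      have hz2 : z = algebraMap K L k * ((algebraMap K L k)⁻¹ * z) := by
        rw [← mul_assoc, mul_inv_cancel₀ hkL, one_mul]
      conv_lhs => rw [hz2]
      rw [← Algebra.smul_def, map_smul, smul_eq_mul]
    rw [hzk, map_mul, hv.vmul, hkv]
    calc (((p : ℤ) ^ n * t : ℤ) : WithTop ℤ)
        = (((p : ℤ) ^ n * t : ℤ) : WithTop ℤ) + 0 := by rw [add_zero]
      _ ≤ _ + vL (algebraMap K L (Algebra.trace K L ((algebraMap K L k)⁻¹ * z))) :=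
          add_le_add_right h0 _
  -- least nonzero index of a column
  have least_idx : ∀ j : ℕ, ∀ i : ℤ, A i j ≠ 0 →
      ∃ i₀ : ℤ, A i₀ j ≠ 0 ∧ ∀ i' : ℤ, A i' j ≠ 0 → i₀ ≤ i' := by
    intro j i hAi
    obtain ⟨i₀, h1, h2⟩ := Int.exists_least_of_bdd (P := fun i' => A i' j ≠ 0)
      ⟨N j, fun z hz => by by_contra h; exact hz (hN j z (by omega))⟩ ⟨i, hAi⟩
    exact ⟨i₀, h1, h2⟩
  -- the key lemma: Dset is cut out by fξ
  have KL : ∀ a' b' : ℤ, ((a', b') ∈ Dset p n A ↔ fξ (-b' - (d - (p : ℤ) ^ n + 1)) ≤ a') := by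
    intro a' b'
    constructor
    · rintro ⟨r, ⟨i, j, hj, hAij, rfl⟩, k, hk1, hk2⟩
      have hk1' : i ≤ a' + k * (p : ℤ) ^ n := hk1
      have hk2' : (j : ℤ) ≤ b' - k * (p : ℤ) ^ n := hk2
      obtain ⟨i₀, hA0, hmin⟩ := least_idx j i hAij
      have hc : vL (c j) = (i₀ : WithTop ℤ) := col_eq j hj i₀ hA0 hmin
      obtain ⟨k', hk'0, hk'v⟩ := exV (-k)
      set y := algebraMap K L k' * D j with hy
      have hyv : vL y = (((p : ℤ) ^ n * (-k) : ℤ) : WithTop ℤ) + vL (D j) := by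
        rw [hy, hv.vmul, hk'v]
      have hyge : ((-b' - (d - (p : ℤ) ^ n + 1) : ℤ) : WithTop ℤ) ≤ vL y := by
        rw [hyv]
        calc ((-b' - (d - (p : ℤ) ^ n + 1) : ℤ) : WithTop ℤ)
            ≤ (((p : ℤ) ^ n * (-k) + ((p : ℤ) ^ n - 1 - d - (j : ℤ)) : ℤ) : WithTop ℤ) :=
              WithTop.coe_le_coe.mpr (by linarith)
          _ = (((p : ℤ) ^ n * (-k) : ℤ) : WithTop ℤ) +
              (((p : ℤ) ^ n - 1 - d - (j : ℤ) : ℤ) : WithTop ℤ) := WithTop.coe_add _ _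
          _ ≤ (((p : ℤ) ^ n * (-k) : ℤ) : WithTop ℤ) + vL (D j) :=
              add_le_add_right (hDlb j hj) _
      have hξy : actK K L ξ y = algebraMap K L k' * c j := by
        rw [act_eq y]
        have hstep : ∀ j' ∈ Finset.range (p ^ n),
            c j' * algebraMap K L (Algebra.trace K L (πL ^ j' * y)) =
            if j' = j then algebraMap K L k' * c j else 0 := by
          intro j' hj'
          have hj'lt := Finset.mem_range.mp hj'
          have hmul : πL ^ j' * y = algebraMap K L k' * (πL ^ j' * D j) := by
            rw [hy]; ring
          rw [hmul, ← Algebra.smul_def, map_smul, (hD j hj).2 j' hj'lt]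
          by_cases hjj : j' = j
          · subst hjj
            rw [if_pos rfl, if_pos rfl, smul_eq_mul, mul_one]
            ring
          · rw [if_neg hjj, if_neg hjj, smul_zero, map_zero, mul_zero]
        rw [Finset.sum_congr rfl hstep, Finset.sum_ite_eq' (Finset.range (p ^ n)) j]
        rw [if_pos (Finset.mem_range.mpr hj)]
      have hvy : vL (actK K L ξ y) = (((p : ℤ) ^ n * (-k) + i₀ : ℤ) : WithTop ℤ) := by
        rw [hξy, hv.vmul, hk'v, hc, ← WithTop.coe_add]
      have hle := (hf (-b' - (d - (p : ℤ) ^ n + 1))).2 ⟨y, hyge, rfl⟩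
      rw [hvy] at hle
      have hle' : fξ (-b' - (d - (p : ℤ) ^ n + 1)) ≤ (p : ℤ) ^ n * (-k) + i₀ :=
        WithTop.coe_le_coe.mp hle
      have hii : i₀ ≤ i := hmin i hAij
      linarith
    · intro hfle
      by_contra hDm
      obtain ⟨y₀, hy₀v, hy₀e⟩ := (hf (-b' - (d - (p : ℤ) ^ n + 1))).1
      have hbig : ((a' + 1 : ℤ) : WithTop ℤ) ≤ vL (actK K L ξ y₀) := by
        rw [act_eq y₀]
        apply hv.vsum_ge
        intro j hjmem
        have hj := Finset.mem_range.mp hjmem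
        have hr0 : 0 ≤ (b' - (j : ℤ)) % ((p : ℤ) ^ n) := Int.emod_nonneg _ (ne_of_gt hEpos)
        have hrE : (b' - (j : ℤ)) % ((p : ℤ) ^ n) < (p : ℤ) ^ n := Int.emod_lt_of_pos _ hEpos
        have hde := Int.mul_ediv_add_emod (b' - (j : ℤ)) ((p : ℤ) ^ n)
        set q := (b' - (j : ℤ)) / ((p : ℤ) ^ n) with hq
        have hcomm : (p : ℤ) ^ n * q = q * (p : ℤ) ^ n := mul_comm _ _
        have hjb : (j : ℤ) ≤ b' - q * (p : ℤ) ^ n := by linarith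
        have hAcol : ∀ i : ℤ, A i j ≠ 0 → a' + q * (p : ℤ) ^ n + 1 ≤ i := by
          intro i hAi
          by_contra hnot
          push_neg at hnot
          refine hDm ⟨(i, (j : ℤ)), ⟨i, j, hj, hAi, rfl⟩, q, ?_, ?_⟩
          · show i ≤ a' + q * (p : ℤ) ^ n
            linarith
          · show (j : ℤ) ≤ b' - q * (p : ℤ) ^ n
            exact hjb
        have hcge : ((a' + q * (p : ℤ) ^ n + 1 : ℤ) : WithTop ℤ) ≤ vL (c j) :=
          col_ge j hj _ hAcol
        have htge : (((p : ℤ) ^ n * (-q) : ℤ) : WithTop ℤ) ≤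
            vL (algebraMap K L (Algebra.trace K L (πL ^ j * y₀))) := by
          apply trace_ge
          calc (((p : ℤ) ^ n * (-q) - d : ℤ) : WithTop ℤ)
              ≤ (((j : ℤ) + (-b' - (d - (p : ℤ) ^ n + 1)) : ℤ) : WithTop ℤ) :=
                WithTop.coe_le_coe.mpr (by linarith)
            _ = ((j : ℤ) : WithTop ℤ) + ((-b' - (d - (p : ℤ) ^ n + 1) : ℤ) : WithTop ℤ) :=
                WithTop.coe_add _ _
            _ ≤ ((j : ℤ) : WithTop ℤ) + vL y₀ := add_le_add_right hy₀v _
            _ = vL (πL ^ j * y₀) := by rw [hv.vmul, hπn j]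
        calc ((a' + 1 : ℤ) : WithTop ℤ)
            = ((a' + q * (p : ℤ) ^ n + 1 : ℤ) : WithTop ℤ) +
              (((p : ℤ) ^ n * (-q) : ℤ) : WithTop ℤ) := by
              rw [← WithTop.coe_add]; congr 1; ring
          _ ≤ vL (c j) + vL (algebraMap K L (Algebra.trace K L (πL ^ j * y₀))) :=
              add_le_add hcge htge
          _ = vL (c j * algebraMap K L (Algebra.trace K L (πL ^ j * y₀))) := (hv.vmul _ _).symm
      rw [hy₀e] at hbig
      have := WithTop.coe_le_coe.mp hbig
      omega
  -- monotonicity and periodicity of fξ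
  have f_mono : ∀ m m' : ℤ, m ≤ m' → fξ m ≤ fξ m' := by
    intro m m' h
    obtain ⟨y, hy, he⟩ := (hf m').1
    have h2 := (hf m).2 ⟨y, le_trans (WithTop.coe_le_coe.mpr h) hy, rfl⟩
    rw [he] at h2
    exact_mod_cast h2
  have f_shift_le : ∀ m t : ℤ, fξ (m + (p : ℤ) ^ n * t) ≤ fξ m + (p : ℤ) ^ n * t := by
    intro m t
    obtain ⟨y, hy, he⟩ := (hf m).1
    obtain ⟨k, hk0, hkv⟩ := exV t
    have h1 : ((m + (p : ℤ) ^ n * t : ℤ) : WithTop ℤ) ≤ vL (algebraMap K L k * y) := by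
      rw [hv.vmul, hkv]
      calc ((m + (p : ℤ) ^ n * t : ℤ) : WithTop ℤ)
          = (((p : ℤ) ^ n * t : ℤ) : WithTop ℤ) + (m : WithTop ℤ) := by
            rw [← WithTop.coe_add]; congr 1; ring
        _ ≤ _ + vL y := add_le_add_right hy _
    have h2 := (hf (m + (p : ℤ) ^ n * t)).2 ⟨algebraMap K L k * y, h1, rfl⟩
    rw [act_smul, hv.vmul, hkv, he, ← WithTop.coe_add] at h2
    have h3 := WithTop.coe_le_coe.mp h2
    linarith
  have f_shift : ∀ m t : ℤ, fξ (m + (p : ℤ) ^ n * t) = fξ m + (p : ℤ) ^ n * t := by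
    intro m t
    refine le_antisymm (f_shift_le m t) ?_
    have h1 := f_shift_le (m + (p : ℤ) ^ n * t) (-t)
    have h2 : m + (p : ℤ) ^ n * t + (p : ℤ) ^ n * (-t) = m := by ring
    rw [h2] at h1
    linarith
  -- conclusion
  constructor
  · rintro ⟨hmem, hminimal⟩
    have h1 : fξ (-b - (d - (p : ℤ) ^ n + 1)) ≤ a := (KL a b).1 hmem
    have h2 : a ≤ fξ (-b - (d - (p : ℤ) ^ n + 1)) := by
      by_contra hcon
      push_neg at hcon
      have hmem₀ : (fξ (-b - (d - (p : ℤ) ^ n + 1)), b) ∈ Dset p n A :=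
        (KL _ b).2 (le_refl _)
      have hcl : cosetLE p n (fξ (-b - (d - (p : ℤ) ^ n + 1)), b) (a, b) := by
        refine ⟨0, ?_, ?_⟩
        · show fξ (-b - (d - (p : ℤ) ^ n + 1)) ≤ a + 0 * (p : ℤ) ^ n
          linarith
        · show b ≤ b - 0 * (p : ℤ) ^ n
          linarith
      obtain ⟨k, hk1, hk2⟩ := hminimal _ hmem₀ hcl
      have hk1' : a ≤ fξ (-b - (d - (p : ℤ) ^ n + 1)) + k * (p : ℤ) ^ n := hk1
      have hk2' : b ≤ b - k * (p : ℤ) ^ n := hk2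
      linarith
    have h3 : a < fξ (-b - (d - (p : ℤ) ^ n + 1) + 1) := by
      by_contra hcon
      push_neg at hcon
      have heq : -(b - 1) - (d - (p : ℤ) ^ n + 1) = -b - (d - (p : ℤ) ^ n + 1) + 1 := by ring
      have hmem' : (a, b - 1) ∈ Dset p n A := (KL a (b - 1)).2 (by rw [heq]; exact hcon)
      have hcl : cosetLE p n (a, b - 1) (a, b) := by
        refine ⟨0, ?_, ?_⟩
        · show a ≤ a + 0 * (p : ℤ) ^ n
          linarith
        · show b - 1 ≤ b - 0 * (p : ℤ) ^ n
          linarith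
      obtain ⟨k, hk1, hk2⟩ := hminimal _ hmem' hcl
      have hk1' : a ≤ a + k * (p : ℤ) ^ n := hk1
      have hk2' : b ≤ b - 1 - k * (p : ℤ) ^ n := hk2
      linarith
    exact ⟨le_antisymm h1 h2, h3⟩
  · rintro ⟨hfa, hflt⟩
    refine ⟨(KL a b).2 (le_of_eq hfa), ?_⟩
    rintro ⟨a'', b''⟩ hin ⟨k, hk1, hk2⟩
    have hk1' : a'' ≤ a + k * (p : ℤ) ^ n := hk1
    have hk2' : b'' ≤ b - k * (p : ℤ) ^ n := hk2
    have hKL'' : fξ (-b'' - (d - (p : ℤ) ^ n + 1)) ≤ a'' := (KL a'' b'').1 hin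
    have hm : (-b - (d - (p : ℤ) ^ n + 1)) + (p : ℤ) ^ n * k ≤
        -b'' - (d - (p : ℤ) ^ n + 1) := by linarith
    have h4 : a + (p : ℤ) ^ n * k ≤ fξ (-b'' - (d - (p : ℤ) ^ n + 1)) := by
      have h5 := f_mono _ _ hm
      rw [f_shift _ k, hfa] at h5
      exact h5
    have ha'' : a'' = a + k * (p : ℤ) ^ n := by linarith
    have hb'' : b'' = b - k * (p : ℤ) ^ n := by
      by_contra hne
      have h6 : b'' < b - k * (p : ℤ) ^ n := lt_of_le_of_ne hk2' hne
      have h5 : b'' + 1 ≤ b - k * (p : ℤ) ^ n := h6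
      have hm2 : (-b - (d - (p : ℤ) ^ n + 1) + 1) + (p : ℤ) ^ n * k ≤
          -b'' - (d - (p : ℤ) ^ n + 1) := by linarith
      have h7 := f_mono _ _ hm2
      rw [f_shift _ k] at h7
      linarith
    exact ⟨-k, show a ≤ a'' + (-k) * (p : ℤ) ^ n by linarith,
      show b ≤ b'' - (-k) * (p : ℤ) ^ n by linarith⟩
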